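/- For every DAG D = (V,A) there exist a minimum-cardinality arc set A' ⊆ A such that D − A' is a funnel and a funnel labeling L of D − A' that assigns Fork to every source of D and Merge to every sink of D that is not also a source. -/

import Mathlib

variable {V : Type*} [Fintype V] [DecidableEq V]

/-- Arc adjacency of a digraph given by its finite arc set. -/
def ArcAdj (A : Finset (V × V)) : V → V → Prop := fun u v => (u, v) ∈ A

/-- A digraph is a DAG if it contains no directed cycle. -/
def IsDAG (A : Finset (V × V)) : Prop := ∀ v : V, ¬ Relation.TransGen (ArcAdj A) v v

/-- Indegree of a vertex. -/
def inDeg (A : Finset (V × V)) (v : V) : ℕ := (A.filter fun e => e.2 = v).card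

/-- Outdegree of a vertex. -/
def outDeg (A : Finset (V × V)) (v : V) : ℕ := (A.filter fun e => e.1 = v).card

/-- A source is a vertex of indegree 0. -/
def IsSource (A : Finset (V × V)) (v : V) : Prop := inDeg A v = 0

/-- A sink is a vertex of outdegree 0. -/
def IsSink (A : Finset (V × V)) (v : V) : Prop := outDeg A v = 0

/-- The arcs (consecutive pairs of vertices) of a path given as a list of vertices. -/
def arcsOf (p : List V) : List (V × V) := p.zip p.tail

/-- A source-sink path: a directed path (with at least one arc) starting at a
source and ending at a sink. -/
def IsSourceSinkPath (A : Finset (V × V)) (p : List V) : Prop :=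
  2 ≤ p.length ∧ List.Chain' (ArcAdj A) p ∧ p.Nodup ∧
  (∃ s, p.head? = some s ∧ IsSource A s) ∧
  (∃ t, p.getLast? = some t ∧ IsSink A t)

/-- An arc is private if exactly one source-sink path contains it. -/
def IsPrivate (A : Finset (V × V)) (e : V × V) : Prop :=
  ∃! p : List V, IsSourceSinkPath A p ∧ e ∈ arcsOf p

/-- A funnel: every source-sink path contains at least one private arc. -/
def IsFunnel (A : Finset (V × V)) : Prop :=
  ∀ p : List V, IsSourceSinkPath A p → ∃ e ∈ arcsOf p, IsPrivate A e

/-- The arc-deletion distance to a funnel: the minimum number of arcs whose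
deletion turns the digraph into a funnel. -/
noncomputable def funnelDist (A : Finset (V × V)) : ℕ :=
  sInf {k | ∃ B ⊆ A, B.card = k ∧ IsFunnel (A \ B)}

/-- Vertex labels for funnel labelings. -/
inductive Label : Type where
  | fork
  | merge
deriving DecidableEq

/-- A funnel labeling: Fork vertices have indegree at most 1, Merge vertices have
outdegree at most 1, and no arc goes from a Merge vertex to a Fork vertex. -/
def FunnelLabeling (A : Finset (V × V)) (L : V → Label) : Prop :=
  (∀ v, L v = Label.fork → inDeg A v ≤ 1) ∧
  (∀ v, L v = Label.merge → outDeg A v ≤ 1) ∧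
  ∀ v u, (v, u) ∈ A → ¬(L v = Label.merge ∧ L u = Label.fork)

open Relation List
set_option linter.unusedSectionVars false

section Helpers
variable {A : Finset (V × V)}

lemma mem_arcsOf_iff {l : List V} {x y : V} :
    (x, y) ∈ arcsOf l ↔ ∃ (i : ℕ) (h : i + 1 < l.length), l[i] = x ∧ l[i+1] = y := by
  unfold arcsOf
  rw [List.mem_iff_getElem]
  constructor
  · rintro ⟨i, hi, hget⟩
    rw [List.getElem_zip] at hget
    have hlen : i + 1 < l.length := by
      rw [List.length_zip, List.length_tail] at hi; omega
    refine ⟨i, hlen, ?_, ?_⟩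
    · exact congrArg Prod.fst hget
    · have := congrArg Prod.snd hget
      simpa [List.getElem_tail] using this
  · rintro ⟨i, hi, hx, hy⟩
    refine ⟨i, ?_, ?_⟩
    · rw [List.length_zip, List.length_tail]; omega
    · rw [List.getElem_zip]
      simp [List.getElem_tail, hx, hy]

lemma chain'_getElem {r : V → V → Prop} {l : List V} (h : List.Chain' r l)
    {i : ℕ} (hi : i + 1 < l.length) : r l[i] l[i+1] := by
  rw [show List.Chain' r l ↔ List.IsChain r l from Iff.rfl, List.isChain_iff_getElem] at h
  have := h i (by omega)
  simpa [List.get_eq_getElem] using this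

lemma chain'_transGen {r : V → V → Prop} {l : List V} (h : List.Chain' r l)
    {i j : ℕ} (hij : i < j) (hj : j < l.length) : Relation.TransGen r l[i] l[j] := by
  induction j with
  | zero => omega
  | succ k ih =>
    rcases Nat.lt_or_ge i k with hk | hk
    · exact (ih hk (by omega)).tail (chain'_getElem h hj)
    · have : i = k := by omega
      subst this
      exact TransGen.single (chain'_getElem h hj)

lemma chain'_nodup (hdag : IsDAG A) {l : List V} (h : List.Chain' (ArcAdj A) l) :
    l.Nodup := by
  by_contra hnd
  rw [List.nodup_iff_injective_getElem, Function.Injective] at hnd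
  push_neg at hnd
  obtain ⟨⟨i, hi⟩, ⟨j, hj⟩, heq, hne⟩ := hnd
  simp only at heq hne
  rcases Nat.lt_or_ge i j with hij | hij
  · exact hdag l[j] (heq ▸ chain'_transGen h hij hj)
  · have hij' : j < i := by
      rcases Nat.lt_or_ge j i with h' | h'
      · exact h'
      · exact absurd (by omega : i = j) (by simpa using hne)
    exact hdag l[j] (heq ▸ chain'_transGen h hij' hi)

lemma arcsOf_cons_cons (a b : V) (l : List V) :
    arcsOf (a :: b :: l) = (a, b) :: arcsOf (b :: l) := rfl

lemma arcsOf_subset_cons {l : List V} {e : V × V} (a : V) (h : e ∈ arcsOf l) :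
    e ∈ arcsOf (a :: l) := by
  cases l with
  | nil => simp [arcsOf] at h
  | cons c m => rw [arcsOf_cons_cons]; exact List.mem_cons_of_mem _ h

lemma arcsOf_append_left {p : List V} (q : List V) {e : V × V} (h : e ∈ arcsOf p) :
    e ∈ arcsOf (p ++ q) := by
  induction p with
  | nil => simp [arcsOf] at h
  | cons a m ih =>
    cases m with
    | nil => simp [arcsOf] at h
    | cons b m' =>
      rw [arcsOf_cons_cons] at h
      rcases List.mem_cons.mp h with h | h
      · subst h; simp [arcsOf_cons_cons]
      · exact arcsOf_subset_cons a (ih h)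

lemma arcsOf_append_right (p : List V) {q : List V} {e : V × V} (h : e ∈ arcsOf q) :
    e ∈ arcsOf (p ++ q) := by
  induction p with
  | nil => simpa using h
  | cons a m ih => exact arcsOf_subset_cons a ih

lemma arcsOf_append_join {p q : List V} {a b : V} (hp : p.getLast? = some a)
    (hq : q.head? = some b) : (a, b) ∈ arcsOf (p ++ q) := by
  induction p with
  | nil => simp at hp
  | cons x m ih =>
    cases m with
    | nil =>
      simp at hp; subst hp
      cases q with
      | nil => simp at hq
      | cons y q' =>
        simp at hq; subst hq
        simp [arcsOf_cons_cons]
    | cons y m' =>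
      rw [List.getLast?_cons_cons] at hp
      exact arcsOf_subset_cons x (ih hp)

lemma arcsOf_append_cases {p q : List V} {a b : V} (hp : p.getLast? = some a)
    (hq : q.head? = some b) {e : V × V} (h : e ∈ arcsOf (p ++ q)) :
    e ∈ arcsOf p ∨ e = (a, b) ∨ e ∈ arcsOf q := by
  induction p with
  | nil => simp at hp
  | cons x m ih =>
    cases m with
    | nil =>
      simp at hp; subst hp
      cases q with
      | nil => simp at hq
      | cons y q' =>
        simp at hq; subst hq
        rw [List.singleton_append, arcsOf_cons_cons] at h
        rcases List.mem_cons.mp h with h | h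
        · exact Or.inr (Or.inl h)
        · exact Or.inr (Or.inr h)
    | cons y m' =>
      rw [List.getLast?_cons_cons] at hp
      rw [List.cons_append, List.cons_append] at h
      have : ((y :: m') ++ q).head? = some y := by simp
      rw [← List.cons_append] at h
      cases hq2 : ((y :: m') ++ q) with
      | nil => simp at hq2
      | cons z r =>
        have hz : z = y := by simpa [hq2] using this
        rw [hq2, arcsOf_cons_cons] at h
        rcases List.mem_cons.mp h with h | h
        · subst h hz
          exact Or.inl (by simp [arcsOf_cons_cons])
        · rw [← hq2] at h
          rcases ih hp h with h | h | h
          · exact Or.inl (arcsOf_subset_cons x h)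
          · exact Or.inr (Or.inl h)
          · exact Or.inr (Or.inr h)

lemma arcsOf_mem_arc {l : List V} (hc : List.Chain' (ArcAdj A) l) {e : V × V}
    (h : e ∈ arcsOf l) : e ∈ A := by
  obtain ⟨x, y⟩ := e
  obtain ⟨i, hi, hx, hy⟩ := mem_arcsOf_iff.mp h
  have := chain'_getElem hc hi
  rw [hx, hy] at this
  exact this

lemma arcsOf_snd_unique {l : List V} (h : l.Nodup) {x x' y : V}
    (h1 : (x, y) ∈ arcsOf l) (h2 : (x', y) ∈ arcsOf l) : x = x' := by
  obtain ⟨i, hi, hxi, hyi⟩ := mem_arcsOf_iff.mp h1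
  obtain ⟨j, hj, hxj, hyj⟩ := mem_arcsOf_iff.mp h2
  rw [List.nodup_iff_injective_getElem] at h
  have : (⟨i+1, hi⟩ : Fin l.length) = ⟨j+1, hj⟩ := h (by simp [hyi, hyj])
  have hij : i = j := by simpa using congrArg Fin.val this
  subst hij
  rw [← hxi, ← hxj]

lemma arcsOf_fst_unique {l : List V} (h : l.Nodup) {x y y' : V}
    (h1 : (x, y) ∈ arcsOf l) (h2 : (x, y') ∈ arcsOf l) : y = y' := by
  obtain ⟨i, hi, hxi, hyi⟩ := mem_arcsOf_iff.mp h1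
  obtain ⟨j, hj, hxj, hyj⟩ := mem_arcsOf_iff.mp h2
  rw [List.nodup_iff_injective_getElem] at h
  have : (⟨i, by omega⟩ : Fin l.length) = ⟨j, by omega⟩ := h (by simp [hxi, hxj])
  have hij : i = j := by simpa using congrArg Fin.val this
  subst hij
  rw [← hyi, ← hyj]

lemma dag_wf (hdag : IsDAG A) : WellFounded (ArcAdj A) := by
  have h1 : IsTrans V (Relation.TransGen (ArcAdj A)) := inferInstance
  have h2 : IsIrrefl V (Relation.TransGen (ArcAdj A)) := ⟨hdag⟩
  exact Subrelation.wf (fun h => Relation.TransGen.single h)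
    (Finite.wellFounded_of_trans_of_irrefl _)

lemma dag_wf_rev (hdag : IsDAG A) : WellFounded (Function.swap (ArcAdj A)) := by
  have hdag' : ∀ v : V, ¬ Relation.TransGen (Function.swap (ArcAdj A)) v v := by
    intro v hv
    exact hdag v (Relation.transGen_swap.mp hv)
  have h1 : IsTrans V (Relation.TransGen (Function.swap (ArcAdj A))) := inferInstance
  have h2 : IsIrrefl V (Relation.TransGen (Function.swap (ArcAdj A))) := ⟨hdag'⟩
  exact Subrelation.wf (fun h => Relation.TransGen.single h)
    (Finite.wellFounded_of_trans_of_irrefl _)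

lemma chain'_join {r : V → V → Prop} {p q : List V} {a b : V} (hp : List.Chain' r p)
    (hq : List.Chain' r q) (ha : p.getLast? = some a) (hb : q.head? = some b)
    (hab : r a b) : List.Chain' r (p ++ q) := by
  refine hp.append hq ?_
  intro x hx y hy
  rw [ha] at hx; rw [hb] at hy
  simp only [Option.mem_some_iff] at hx hy
  subst hx; subst hy; exact hab

lemma exists_path_from_source (hdag : IsDAG A) (v : V) :
    ∃ p : List V, p ≠ [] ∧ List.Chain' (ArcAdj A) p ∧
      (∃ s, p.head? = some s ∧ IsSource A s) ∧ p.getLast? = some v := by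
  induction v using (dag_wf hdag).induction with
  | _ v ih =>
    by_cases h : inDeg A v = 0
    · exact ⟨[v], by simp, List.isChain_singleton _, ⟨v, by simp, h⟩, by simp⟩
    · have hne : (A.filter fun e => e.2 = v).Nonempty :=
        Finset.card_pos.mp (Nat.pos_of_ne_zero h)
      obtain ⟨e, he⟩ := hne
      obtain ⟨heA, hev⟩ := Finset.mem_filter.mp he
      have harc : ArcAdj A e.1 v := by
        unfold ArcAdj; rw [← hev]
        simpa using heA
      obtain ⟨p, hpne, hch, ⟨s, hh, hsrc⟩, hlast⟩ := ih e.1 harc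
      refine ⟨p ++ [v], by simp, ?_, ⟨s, ?_, hsrc⟩, ?_⟩
      · exact chain'_join hch (List.isChain_singleton v) hlast (by simp) harc
      · rw [List.head?_append_of_ne_nil _ hpne]; exact hh
      · rw [List.getLast?_append_of_ne_nil _ (by simp)]; simp

lemma exists_path_to_sink (hdag : IsDAG A) (v : V) :
    ∃ p : List V, p ≠ [] ∧ List.Chain' (ArcAdj A) p ∧ p.head? = some v ∧
      (∃ t, p.getLast? = some t ∧ IsSink A t) := by
  induction v using (dag_wf_rev hdag).induction with
  | _ v ih =>
    by_cases h : outDeg A v = 0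
    · exact ⟨[v], by simp, List.isChain_singleton _, by simp, ⟨v, by simp, h⟩⟩
    · have hne : (A.filter fun e => e.1 = v).Nonempty :=
        Finset.card_pos.mp (Nat.pos_of_ne_zero h)
      obtain ⟨e, he⟩ := hne
      obtain ⟨heA, hev⟩ := Finset.mem_filter.mp he
      have harc : ArcAdj A v e.2 := by
        unfold ArcAdj; rw [← hev]
        simpa using heA
      obtain ⟨p, hpne, hch, hh, ⟨t, hlast, hsink⟩⟩ := ih e.2 harc
      refine ⟨v :: p, by simp, ?_, by simp, ⟨t, ?_, hsink⟩⟩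
      · refine List.isChain_cons.mpr ⟨?_, hch⟩
        intro y hy
        rw [hh] at hy
        simp only [Option.mem_some_iff] at hy
        subst hy; exact harc
      · cases p with
        | nil => exact absurd rfl hpne
        | cons x m => rw [List.getLast?_cons_cons]; exact hlast

lemma reflTransGen_path {w v : V} (h : Relation.ReflTransGen (ArcAdj A) w v) :
    ∃ p : List V, p ≠ [] ∧ List.Chain' (ArcAdj A) p ∧ p.head? = some w ∧
      p.getLast? = some v := by
  induction h with
  | refl => exact ⟨[w], by simp, List.isChain_singleton _, by simp, by simp⟩
  | @tail b c h harc ih =>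
    obtain ⟨p, hpne, hch, hh, hlast⟩ := ih
    refine ⟨p ++ [c], by simp, ?_, ?_, ?_⟩
    · exact chain'_join hch (List.isChain_singleton c) hlast (by simp) harc
    · rw [List.head?_append_of_ne_nil _ hpne]; exact hh
    · rw [List.getLast?_append_of_ne_nil _ (by simp)]; simp

lemma funnel_merge_outdeg (hdag : IsDAG A) (hfun : IsFunnel A) {w v : V}
    (hw : 2 ≤ inDeg A w) (hreach : Relation.ReflTransGen (ArcAdj A) w v) :
    outDeg A v ≤ 1 := by
  by_contra hout
  push_neg at hout
  unfold inDeg at hw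
  unfold outDeg at hout
  obtain ⟨e1, he1, e2, he2, hne12⟩ := Finset.one_lt_card.mp (by omega :
    1 < (A.filter fun e => e.2 = w).card)
  obtain ⟨a, w1⟩ := e1
  obtain ⟨b, w2⟩ := e2
  obtain ⟨he1A, he1w⟩ := Finset.mem_filter.mp he1
  obtain ⟨he2A, he2w⟩ := Finset.mem_filter.mp he2
  simp only at he1w he2w
  obtain rfl := he1w.symm; obtain rfl := he2w.symm
  have hab : a ≠ b := fun h => hne12 (by rw [h])
  obtain ⟨f1, hf1, f2, hf2, hnef⟩ := Finset.one_lt_card.mp (hout :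
    1 < (A.filter fun e => e.1 = v).card)
  obtain ⟨v1, c⟩ := f1
  obtain ⟨v2, d⟩ := f2
  obtain ⟨hf1A, hf1v⟩ := Finset.mem_filter.mp hf1
  obtain ⟨hf2A, hf2v⟩ := Finset.mem_filter.mp hf2
  simp only at hf1v hf2v
  obtain rfl := hf1v.symm; obtain rfl := hf2v.symm
  have hcd : c ≠ d := fun h => hnef (by rw [h])
  have harc_aw : ArcAdj A a w := he1A
  have harc_bw : ArcAdj A b w := he2A
  have harc_vc : ArcAdj A v c := hf1A
  have harc_vd : ArcAdj A v d := hf2A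
  obtain ⟨Psa, hPsa_ne, hPsa_ch, ⟨s1, hs1h, hs1src⟩, hPsa_last⟩ :=
    exists_path_from_source hdag a
  obtain ⟨Psb, hPsb_ne, hPsb_ch, ⟨s2, hs2h, hs2src⟩, hPsb_last⟩ :=
    exists_path_from_source hdag b
  obtain ⟨Pwv, hPwv_ne, hPwv_ch, hPwv_h, hPwv_last⟩ := reflTransGen_path hreach
  obtain ⟨Pct, hPct_ne, hPct_ch, hPct_h, ⟨t1, hPct_last, ht1sink⟩⟩ :=
    exists_path_to_sink hdag c
  obtain ⟨Pdt, hPdt_ne, hPdt_ch, hPdt_h, ⟨t2, hPdt_last, ht2sink⟩⟩ :=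
    exists_path_to_sink hdag d
  set Q1 : List V := Pwv ++ Pct with hQ1def
  set Q2 : List V := Pwv ++ Pdt with hQ2def
  have hQ1_ne : Q1 ≠ [] := by simp [hQ1def, hPwv_ne]
  have hQ2_ne : Q2 ≠ [] := by simp [hQ2def, hPwv_ne]
  have hQ1_ch : List.Chain' (ArcAdj A) Q1 :=
    chain'_join hPwv_ch hPct_ch hPwv_last hPct_h harc_vc
  have hQ2_ch : List.Chain' (ArcAdj A) Q2 :=
    chain'_join hPwv_ch hPdt_ch hPwv_last hPdt_h harc_vd
  have hQ1_h : Q1.head? = some w := by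
    rw [hQ1def, List.head?_append_of_ne_nil _ hPwv_ne]; exact hPwv_h
  have hQ2_h : Q2.head? = some w := by
    rw [hQ2def, List.head?_append_of_ne_nil _ hPwv_ne]; exact hPwv_h
  have hQ1_last : Q1.getLast? = some t1 := by
    rw [hQ1def, List.getLast?_append_of_ne_nil _ hPct_ne]; exact hPct_last
  have hQ2_last : Q2.getLast? = some t2 := by
    rw [hQ2def, List.getLast?_append_of_ne_nil _ hPdt_ne]; exact hPdt_last
  have mk : ∀ (p q : List V), p ≠ [] → q ≠ [] →
      List.Chain' (ArcAdj A) (p ++ q) → ∀ s t : V, p.head? = some s → IsSource A s →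
      q.getLast? = some t → IsSink A t → IsSourceSinkPath A (p ++ q) := by
    intro p q hpne hqne hch s t hh hsrc hlast hsink
    refine ⟨?_, hch, chain'_nodup hdag hch, ⟨s, ?_, hsrc⟩, ⟨t, ?_, hsink⟩⟩
    · have h1 := List.length_pos_iff.mpr hpne
      have h2 := List.length_pos_iff.mpr hqne
      rw [List.length_append]; omega
    · rw [List.head?_append_of_ne_nil _ hpne]; exact hh
    · rw [List.getLast?_append_of_ne_nil _ hqne]; exact hlast
  have hchP : List.Chain' (ArcAdj A) (Psa ++ Q1) :=
    chain'_join hPsa_ch hQ1_ch hPsa_last hQ1_h harc_aw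
  have hchP1 : List.Chain' (ArcAdj A) (Psb ++ Q1) :=
    chain'_join hPsb_ch hQ1_ch hPsb_last hQ1_h harc_bw
  have hchP2 : List.Chain' (ArcAdj A) (Psa ++ Q2) :=
    chain'_join hPsa_ch hQ2_ch hPsa_last hQ2_h harc_aw
  have hP : IsSourceSinkPath A (Psa ++ Q1) :=
    mk _ _ hPsa_ne hQ1_ne hchP s1 t1 hs1h hs1src hQ1_last ht1sink
  have hP1 : IsSourceSinkPath A (Psb ++ Q1) :=
    mk _ _ hPsb_ne hQ1_ne hchP1 s2 t1 hs2h hs2src hQ1_last ht1sink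
  have hP2 : IsSourceSinkPath A (Psa ++ Q2) :=
    mk _ _ hPsa_ne hQ2_ne hchP2 s1 t2 hs1h hs1src hQ2_last ht2sink
  have hPnd : (Psa ++ Q1).Nodup := chain'_nodup hdag hchP
  have hawP : (a, w) ∈ arcsOf (Psa ++ Q1) := arcsOf_append_join hPsa_last hQ1_h
  have hbwP1 : (b, w) ∈ arcsOf (Psb ++ Q1) := arcsOf_append_join hPsb_last hQ1_h
  have hvcQ1 : (v, c) ∈ arcsOf Q1 := arcsOf_append_join hPwv_last hPct_h
  have hvdQ2 : (v, d) ∈ arcsOf Q2 := arcsOf_append_join hPwv_last hPdt_h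
  have hvcP : (v, c) ∈ arcsOf (Psa ++ Q1) := arcsOf_append_right _ hvcQ1
  have hvdP2 : (v, d) ∈ arcsOf (Psa ++ Q2) := arcsOf_append_right _ hvdQ2
  have hPP1 : Psa ++ Q1 ≠ Psb ++ Q1 := by
    intro hEq
    have h1 : (b, w) ∈ arcsOf (Psa ++ Q1) := by rw [hEq]; exact hbwP1
    exact hab (arcsOf_snd_unique hPnd hawP h1)
  have hPP2 : Psa ++ Q1 ≠ Psa ++ Q2 := by
    intro hEq
    have h1 : (v, d) ∈ arcsOf (Psa ++ Q1) := by rw [hEq]; exact hvdP2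
    exact hcd (arcsOf_fst_unique hPnd hvcP h1)
  obtain ⟨e, heP, hpriv⟩ := hfun _ hP
  rcases arcsOf_append_cases hPsa_last hQ1_h heP with h | h | h
  · have heP2 : e ∈ arcsOf (Psa ++ Q2) := arcsOf_append_left _ h
    exact hPP2 (hpriv.unique ⟨hP, heP⟩ ⟨hP2, heP2⟩)
  · have heP2 : e ∈ arcsOf (Psa ++ Q2) := by
      rw [h]; exact arcsOf_append_join hPsa_last hQ2_h
    exact hPP2 (hpriv.unique ⟨hP, heP⟩ ⟨hP2, heP2⟩)
  · rcases arcsOf_append_cases hPwv_last hPct_h h with h' | h' | h'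
    · have heP2 : e ∈ arcsOf (Psa ++ Q2) :=
        arcsOf_append_right _ (arcsOf_append_left _ h')
      exact hPP2 (hpriv.unique ⟨hP, heP⟩ ⟨hP2, heP2⟩)
    · have heP1 : e ∈ arcsOf (Psb ++ Q1) := by
        rw [h']; exact arcsOf_append_right _ hvcQ1
      exact hPP1 (hpriv.unique ⟨hP, heP⟩ ⟨hP1, heP1⟩)
    · have heP1 : e ∈ arcsOf (Psb ++ Q1) :=
        arcsOf_append_right _ (arcsOf_append_right _ h')
      exact hPP1 (hpriv.unique ⟨hP, heP⟩ ⟨hP1, heP1⟩)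

end Helpers

lemma inDeg_mono {A B : Finset (V × V)} (h : B ⊆ A) (v : V) : inDeg B v ≤ inDeg A v :=
  Finset.card_le_card (Finset.filter_subset_filter _ h)

lemma outDeg_mono {A B : Finset (V × V)} (h : B ⊆ A) (v : V) : outDeg B v ≤ outDeg A v :=
  Finset.card_le_card (Finset.filter_subset_filter _ h)

theorem exists_min_solution_with_normalized_labeling' (A : Finset (V × V))
    (hdag : IsDAG A) :
    ∃ A' ⊆ A, IsFunnel (A \ A') ∧
      (∀ B ⊆ A, IsFunnel (A \ B) → A'.card ≤ B.card) ∧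
      ∃ L : V → Label, FunnelLabeling (A \ A') L ∧
        (∀ v, IsSource A v → L v = Label.fork) ∧
        (∀ v, IsSink A v → ¬ IsSource A v → L v = Label.merge) := by
  classical
  set S : Set ℕ := {k | ∃ B ⊆ A, B.card = k ∧ IsFunnel (A \ B)} with hSdef
  have hAS : A.card ∈ S := by
    refine ⟨A, Finset.Subset.refl A, rfl, ?_⟩
    intro p hp
    obtain ⟨hlen, hch, -, -⟩ := hp
    exfalso
    match p, hlen, hch with
    | x :: y :: l, _, hch =>
      have : ArcAdj (A \ A) x y := (List.isChain_cons_cons.mp hch).1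
      simp [ArcAdj] at this
  obtain ⟨B, hBA, hBcard, hBfun⟩ := Nat.sInf_mem (Set.nonempty_of_mem hAS)
  refine ⟨B, hBA, hBfun, ?_, ?_⟩
  · intro B' hB'A hB'fun
    exact hBcard ▸ Nat.sInf_le ⟨B', hB'A, rfl, hB'fun⟩
  · set F : Finset (V × V) := A \ B with hFdef
    have hFA : F ⊆ A := Finset.sdiff_subset
    have hFdag : IsDAG F := by
      intro x hx
      exact hdag x (Relation.TransGen.mono (r := ArcAdj F) (p := ArcAdj A) (fun u u' h => hFA h) x x hx)
    set cond : V → Prop := fun u =>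
      (∃ x, 2 ≤ inDeg F x ∧ Relation.ReflTransGen (ArcAdj F) x u) ∨
        (IsSink A u ∧ ¬ IsSource A u) with hconddef
    refine ⟨fun u => if cond u then Label.merge else Label.fork, ⟨?_, ?_, ?_⟩, ?_, ?_⟩
    · -- fork → inDeg ≤ 1
      intro u hu
      by_cases h : cond u
      · simp [h] at hu
      · have h2 : ¬ (2 ≤ inDeg F u ∧ Relation.ReflTransGen (ArcAdj F) u u) := by
          intro h2; exact h (Or.inl ⟨u, h2⟩)
        by_contra hle
        exact h2 ⟨by omega, Relation.ReflTransGen.refl⟩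
    · -- merge → outDeg ≤ 1
      intro u hu
      by_cases h : cond u
      · rcases h with ⟨x, hx2, hxr⟩ | ⟨hsink, -⟩
        · exact funnel_merge_outdeg hFdag hBfun hx2 hxr
        · calc outDeg F u ≤ outDeg A u := outDeg_mono hFA u
            _ ≤ 1 := by rw [hsink]; omega
      · simp [h] at hu
    · -- no merge → fork arc
      intro x u hxu ⟨hxm, huf⟩
      by_cases hx : cond x
      · by_cases hu : cond u
        · simp [hu] at huf
        · rcases hx with ⟨y, hy2, hyr⟩ | ⟨hsink, -⟩
          · exact hu (Or.inl ⟨y, hy2, hyr.tail hxu⟩)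
          · have : (x, u) ∈ A.filter fun e => e.1 = x :=
              Finset.mem_filter.mpr ⟨hFA hxu, rfl⟩
            have hpos : 0 < outDeg A x := Finset.card_pos.mpr ⟨(x, u), this⟩
            rw [IsSink] at hsink
            omega
      · simp [hx] at hxm
    · -- sources of A are fork
      intro u hsrc
      have hnc : ¬ cond u := by
        rintro (⟨x, hx2, hxr⟩ | ⟨-, hnsrc⟩)
        · rcases hxr.cases_tail with h | ⟨y, -, hyu⟩
          · subst h
            have : inDeg F u ≤ inDeg A u := inDeg_mono hFA u
            rw [IsSource] at hsrc
            omega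
          · have : (y, u) ∈ A.filter fun e => e.2 = u :=
              Finset.mem_filter.mpr ⟨hFA hyu, rfl⟩
            have hpos : 0 < inDeg A u := Finset.card_pos.mpr ⟨(y, u), this⟩
            rw [IsSource] at hsrc
            omega
        · exact hnsrc hsrc
      simp [hnc]
    · -- sinks-not-sources of A are merge
      intro u hsink hnsrc
      have hc : cond u := Or.inr ⟨hsink, hnsrc⟩
      simp [hc]

/-- Every DAG `D` admits a minimum-cardinality arc set `A'` such
that `D - A'` is a funnel, together with a funnel labeling of `D - A'` that
labels every source of `D` Fork and every sink of `D` that is not a source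
Merge. -/
theorem exists_min_solution_with_normalized_labeling (A : Finset (V × V))
    (hdag : IsDAG A) :
    ∃ A' ⊆ A, IsFunnel (A \ A') ∧
      (∀ B ⊆ A, IsFunnel (A \ B) → A'.card ≤ B.card) ∧
      ∃ L : V → Label, FunnelLabeling (A \ A') L ∧
        (∀ v, IsSource A v → L v = Label.fork) ∧
        (∀ v, IsSink A v → ¬ IsSource A v → L v = Label.merge) := by
  exact exists_min_solution_with_normalized_labeling' A hdag
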